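/- Let σ = (σ_0,…,σ_n) be a changemaker vector and let x be a positive integer. Then the (xp − |σ|₁)-th relevant coefficient of σ satisfies 2·V^σ_{xp − |σ|₁} = x²p − x|σ|₁. -/
import Mathlib


open Finset

/-- `σ` is a changemaker vector: all entries are positive and every integer `k` with
`0 ≤ k ≤ σ_0 + ⋯ + σ_n` is the sum of a subset of the entries. -/
def IsChangemaker {n : ℕ} (σ : Fin (n + 1) → ℕ) : Prop :=
  (∀ i, 0 < σ i) ∧
    ∀ k : ℕ, k ≤ ∑ i, σ i → ∃ A : Finset (Fin (n + 1)), ∑ i ∈ A, σ i = k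

/-- `Tcm σ m = T^σ_m`, the maximum of `σ·α` over all `α ∈ ℤ_{≥0}^{n+1}` with
`Σ_j α_j (α_j + 1) ≤ 2m` (the maximum exists: the set is nonempty and bounded). -/
noncomputable def Tcm {n : ℕ} (σ : Fin (n + 1) → ℕ) (m : ℕ) : ℕ :=
  sSup {t : ℕ | ∃ α : Fin (n + 1) → ℕ,
    (∑ j, α j * (α j + 1)) ≤ 2 * m ∧ t = ∑ j, σ j * α j}

/-- `Vcm σ i = V^σ_i`, the `i`-th relevant coefficient of `σ`:
the least `m` with `T^σ_m ≥ i` (and `V^σ_0 = 0`). -/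
noncomputable def Vcm {n : ℕ} (σ : Fin (n + 1) → ℕ) (i : ℕ) : ℕ :=
  sInf {m : ℕ | i ≤ Tcm σ m}

lemma int_mul_pred_nonneg (z : ℤ) : 0 ≤ z * (z - 1) := by
  rcases le_or_gt z 0 with h | h
  · nlinarith
  · nlinarith [Int.lt_iff_add_one_le.mp h]

theorem stmt_3 {n : ℕ} (σ : Fin (n + 1) → ℕ) (hσ : IsChangemaker σ)
    (x : ℕ) (hx : 0 < x) (k : ℕ)
    (hk : k + (∑ i, σ i) = x * ∑ i, (σ i) ^ 2) :
    2 * Vcm σ k + x * (∑ i, σ i) = x ^ 2 * (∑ i, (σ i) ^ 2) := by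
  obtain ⟨hpos, -⟩ := hσ
  set b : Fin (n+1) → ℕ := fun j => x * σ j - 1 with hbdef
  have hB : ∀ j, (b j : ℤ) + 1 = (x : ℤ) * σ j := by
    intro j
    have h1 : 1 ≤ x * σ j := Nat.one_le_iff_ne_zero.mpr
      (Nat.mul_ne_zero hx.ne' (hpos j).ne')
    have h2 : (b j) + 1 = x * σ j := Nat.sub_add_cancel h1
    exact_mod_cast h2
  have hkZ : (k:ℤ) + (∑ i, (σ i:ℤ)) = x * ∑ i, (σ i:ℤ)^2 := by exact_mod_cast hk
  have hσb : ∑ j, (σ j : ℤ) * b j = k := by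
    have h : (∑ j, (σ j:ℤ) * b j) + ∑ j, (σ j:ℤ) = (x:ℤ) * ∑ j, (σ j:ℤ)^2 := by
      rw [← Finset.sum_add_distrib, Finset.mul_sum]
      exact Finset.sum_congr rfl fun j _ => by linear_combination (σ j : ℤ) * hB j
    linear_combination h - hkZ
  have hbb : ∑ j, (b j:ℤ) * (b j + 1) = (x:ℤ) * k := by
    have h : (∑ j, (b j:ℤ) * (b j+1)) + (x:ℤ) * ∑ j, (σ j:ℤ)
        = (x:ℤ) * ((x:ℤ) * ∑ j, (σ j:ℤ)^2) := by
      rw [Finset.mul_sum, ← Finset.sum_add_distrib, Finset.mul_sum, Finset.mul_sum]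
      exact Finset.sum_congr rfl fun j _ =>
        by linear_combination ((b j:ℤ) + (x:ℤ) * σ j) * hB j
    linear_combination h - (x:ℤ) * hkZ
  have hσbN : ∑ j, σ j * b j = k := by exact_mod_cast hσb
  have hbbN : ∑ j, b j * (b j + 1) = x * k := by exact_mod_cast hbb
  have hev : Even (x * k) := by
    rw [← hbbN]
    exact Finset.even_sum _ fun j _ => Nat.even_mul_succ_self (b j)
  obtain ⟨m₀, hm₀⟩ := hev
  -- key inequality
  have key : ∀ (α : Fin (n+1) → ℕ), k ≤ ∑ j, σ j * α j →
      x * k ≤ ∑ j, α j * (α j + 1) := by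
    intro α hα
    have hαZ : (k:ℤ) ≤ ∑ j, (σ j:ℤ) * α j := by exact_mod_cast hα
    have hid : (∑ j, (α j:ℤ) * (α j + 1)) =
        (∑ j, (b j:ℤ) * (b j + 1))
        + 2*(x:ℤ)*(∑ j, (σ j:ℤ)*α j) - 2*(x:ℤ)*(∑ j, (σ j:ℤ)*b j)
        + ∑ j, ((α j:ℤ) - b j) * ((α j:ℤ) - b j - 1) := by
      rw [Finset.mul_sum, Finset.mul_sum, ← Finset.sum_add_distrib,
        ← Finset.sum_sub_distrib, ← Finset.sum_add_distrib]
      exact Finset.sum_congr rfl fun j _ =>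
        by linear_combination (2*(α j:ℤ) - 2*(b j:ℤ)) * hB j
    have hdd : 0 ≤ ∑ j, ((α j:ℤ) - b j) * ((α j:ℤ) - b j - 1) :=
      Finset.sum_nonneg fun j _ => int_mul_pred_nonneg _
    have h2 : 2*(x:ℤ)*(k:ℤ) ≤ 2*(x:ℤ)*(∑ j, (σ j:ℤ)*α j) :=
      mul_le_mul_of_nonneg_left hαZ (by positivity)
    have hfin : (x:ℤ) * k ≤ ∑ j, (α j:ℤ)*(α j+1) := by
      rw [hid, hσb, hbb]; linarith
    exact_mod_cast hfin
  -- Tcm set facts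
  have hTne : ∀ m : ℕ, {t : ℕ | ∃ α : Fin (n + 1) → ℕ,
      (∑ j, α j * (α j + 1)) ≤ 2 * m ∧ t = ∑ j, σ j * α j}.Nonempty := by
    intro m
    exact ⟨∑ j, σ j * (0:ℕ), fun _ => 0, by simp, by simp⟩
  have hTbdd : ∀ m : ℕ, BddAbove {t : ℕ | ∃ α : Fin (n + 1) → ℕ,
      (∑ j, α j * (α j + 1)) ≤ 2 * m ∧ t = ∑ j, σ j * α j} := by
    intro m
    refine ⟨(∑ j, σ j) * (2*m), ?_⟩
    rintro t ⟨α, hα1, rfl⟩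
    have hαle : ∀ j, α j ≤ 2*m := by
      intro j
      have h1 : α j ≤ α j * (α j + 1) := Nat.le_mul_of_pos_right _ (Nat.succ_pos _)
      have h2 : α j * (α j + 1) ≤ ∑ j, α j * (α j + 1) :=
        Finset.single_le_sum (f := fun j => α j * (α j + 1))
          (fun i _ => Nat.zero_le _) (Finset.mem_univ j)
      omega
    calc ∑ j, σ j * α j ≤ ∑ j, σ j * (2*m) :=
          Finset.sum_le_sum fun j _ => Nat.mul_le_mul_left _ (hαle j)
      _ = (∑ j, σ j) * (2*m) := by rw [Finset.sum_mul]
  have hTm₀ : k ≤ Tcm σ m₀ := by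
    unfold Tcm
    refine le_csSup (hTbdd m₀) ⟨b, ?_, hσbN.symm⟩
    rw [hbbN]; omega
  have hlow : ∀ m, k ≤ Tcm σ m → m₀ ≤ m := by
    intro m hm
    have hmem := Nat.sSup_mem (hTne m) (hTbdd m)
    obtain ⟨α, hα1, hα2⟩ := hmem
    have hk2 : k ≤ ∑ j, σ j * α j := by
      unfold Tcm at hm; rw [← hα2]; exact hm
    have h3 := key α hk2
    linarith
  have hV : Vcm σ k = m₀ := by
    unfold Vcm
    apply le_antisymm
    · exact Nat.sInf_le hTm₀
    · exact le_csInf ⟨m₀, hTm₀⟩ fun m hm => hlow m hm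
  rw [hV]
  calc 2*m₀ + x*(∑ i, σ i) = x * k + x*(∑ i, σ i) := by omega
    _ = x * (k + ∑ i, σ i) := by ring
    _ = x * (x * ∑ i, (σ i)^2) := by rw [hk]
    _ = x ^ 2 * (∑ i, (σ i)^2) := by ring
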